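/- Fix ξ ∈ [0, 1/2). There exist constants C > 0 and A₀ > 0 such that for every a > A₀ the function ℓ_{a,N} has a zero μ⁺(a) in the upper half-plane satisfying |Re μ⁺(a) + (1/2) a^{−2(1−ξ)} ∑_{j=1}^N c_j| ≤ C a^{−2(1−ξ)} and |Im μ⁺(a) − a| ≤ C a^{−(1−2ξ)}; moreover the complex conjugate of μ⁺(a) is also a zero of ℓ_{a,N}. -/

import Mathlib

private lemma norm_div_le_aux (u v : ℂ) {M m : ℝ} (hM : ‖u‖ ≤ M) (hm : 0 < m)
    (hv : m ≤ ‖v‖) : ‖u / v‖ ≤ M / m := by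
  rw [norm_div]; exact div_le_div₀ (le_trans (norm_nonneg u) hM) hM hm hv

set_option maxHeartbeats 1000000 in
/-- Fix `ξ ∈ [0, 1/2)`. There are `C > 0` and `A₀ > 0` such that for every
`a > A₀` the symbol `ℓ_{a,N}` has a zero `μ⁺(a)` in the upper half-plane with
`|Re μ⁺(a) + (1/2) a^(-2(1-ξ)) ∑_{j<N} c j| ≤ C a^(-2(1-ξ))` and
`|Im μ⁺(a) - a| ≤ C a^(-(1-2ξ))`, and its complex conjugate is also a zero of `ℓ_{a,N}`.
(Indexing is `0`-based: `c 0, γ 0` correspond to `c_1, γ_1`.) -/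
theorem stmt_11
    (N : ℕ) (hN : 1 ≤ N) (c γs : ℕ → ℝ)
    (hc : ∀ k, k < N → 0 < c k)
    (hγ0 : 0 < γs 0)
    (hγmono : ∀ i j : ℕ, i < j → j < N → γs i < γs j)
    (ξ : ℝ) (hξ0 : 0 ≤ ξ) (hξ1 : ξ < 1 / 2)
    (ℓ : ℝ → ℂ → ℂ)
    (hℓ : ∀ a : ℝ, ∀ ζ : ℂ, ℓ a ζ = ζ ^ 2 + (a : ℂ) ^ 2
        - ((a ^ (2 * ξ) : ℝ) : ℂ) * ∑ k ∈ Finset.range N, (c k : ℂ) / (ζ + (γs k : ℂ))) :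
    ∃ C : ℝ, 0 < C ∧ ∃ A₀ : ℝ, 0 < A₀ ∧ ∀ a : ℝ, A₀ < a →
      ∃ μ : ℂ, ℓ a μ = 0 ∧ 0 < μ.im ∧
        |μ.re + (1 / 2) * a ^ (-(2 * (1 - ξ))) * ∑ j ∈ Finset.range N, c j|
          ≤ C * a ^ (-(2 * (1 - ξ))) ∧
        |μ.im - a| ≤ C * a ^ (-(1 - 2 * ξ)) ∧
        ℓ a ((starRingEnd ℂ) μ) = 0 := by
  set Scs : ℝ := ∑ j ∈ Finset.range N, c j with hScdef
  have hScpos : 0 < Scs := by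
    apply Finset.sum_pos (fun k hk => hc k (Finset.mem_range.mp hk))
    exact ⟨0, Finset.mem_range.mpr hN⟩
  refine ⟨3 * Scs, by positivity, 12 * Scs + 1, by positivity, fun a ha => ?_⟩
  have ha1 : 1 < a := by nlinarith
  have ha0 : 0 < a := by linarith
  have haa : 12 * Scs ≤ a * a := by nlinarith
  -- basic powers
  set R : ℝ := a ^ (2 * ξ) with hRdef
  have hR0 : 0 < R := Real.rpow_pos_of_pos ha0 _
  have hRa : R ≤ a := by
    calc R ≤ a ^ (1 : ℝ) := Real.rpow_le_rpow_of_exponent_le ha1.le (by linarith)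
    _ = a := Real.rpow_one a
  set r : ℝ := 2 * Scs * R / (a * a) with hrdef
  have hr0 : 0 < r := by positivity
  have hra2 : r ≤ a / 2 := by
    have h1 : r ≤ 2 * Scs / a := by
      rw [hrdef, div_le_div_iff₀ (by positivity) ha0]
      nlinarith [mul_le_mul_of_nonneg_left hRa (by positivity : (0:ℝ) ≤ 2 * Scs * a)]
    have h2 : 2 * Scs / a ≤ a / 2 := by
      rw [div_le_div_iff₀ ha0 (by norm_num)]
      nlinarith
    linarith
  -- the rpow quantities in the statement
  have hX : a ^ (-(2 * (1 - ξ))) = R / (a * a) := by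
    have : -(2 * (1 - ξ)) = 2 * ξ + (-2 : ℝ) := by ring
    rw [this, Real.rpow_add ha0, hRdef]
    congr 1
    rw [show ((-2 : ℝ)) = -((2 : ℕ) : ℝ) by norm_num, Real.rpow_neg ha0.le,
      Real.rpow_natCast]
    field_simp
  have hXY : a ^ (-(2 * (1 - ξ))) ≤ a ^ (-(1 - 2 * ξ)) :=
    Real.rpow_le_rpow_of_exponent_le ha1.le (by linarith)
  have hXpos : 0 < a ^ (-(2 * (1 - ξ))) := Real.rpow_pos_of_pos ha0 _
  set z0 : ℂ := Complex.I * a with hz0def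
  have hz0im : z0.im = a := by simp [hz0def]
  have hz0re : z0.re = 0 := by simp [hz0def]
  set S : ℂ → ℂ := fun ζ => ∑ k ∈ Finset.range N, (c k : ℂ) / (ζ + (γs k : ℂ)) with hSdef
  set T : ℂ → ℂ := fun ζ => z0 + (R : ℂ) * S ζ / (ζ + z0) with hTdef
  set D : Set ℂ := Metric.closedBall z0 r with hDdef
  -- estimates on D
  have hmemD : ∀ ζ ∈ D, ‖ζ - z0‖ ≤ r := by
    intro ζ hζ
    rw [← dist_eq_norm]
    exact Metric.mem_closedBall.mp hζ
  have hIm : ∀ ζ ∈ D, a / 2 ≤ ζ.im := by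
    intro ζ hζ
    have h1 : |ζ.im - a| ≤ r := by
      have := Complex.abs_im_le_norm (ζ - z0)
      simpa [hz0im] using this.trans (hmemD ζ hζ)
    have := abs_le.mp h1
    linarith
  have hγnorm : ∀ ζ ∈ D, ∀ k, a / 2 ≤ ‖ζ + (γs k : ℂ)‖ := by
    intro ζ hζ k
    have h1 : (ζ + (γs k : ℂ)).im = ζ.im := by simp
    calc a / 2 ≤ ζ.im := hIm ζ hζ
    _ ≤ |(ζ + (γs k : ℂ)).im| := by rw [h1]; exact le_abs_self _
    _ ≤ ‖ζ + (γs k : ℂ)‖ := by exact Complex.abs_im_le_norm _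
  have hz0norm : ∀ ζ ∈ D, a ≤ ‖ζ + z0‖ := by
    intro ζ hζ
    have h1 : (ζ + z0).im = ζ.im + a := by simp [hz0im]
    have h2 := hIm ζ hζ
    calc a ≤ ζ.im + a := by linarith
    _ ≤ |(ζ + z0).im| := by rw [h1]; exact le_abs_self _
    _ ≤ ‖ζ + z0‖ := by exact Complex.abs_im_le_norm _
  have hγne : ∀ ζ ∈ D, ∀ k, ζ + (γs k : ℂ) ≠ 0 := by
    intro ζ hζ k h
    have := hγnorm ζ hζ k
    rw [h, norm_zero] at this
    linarith
  have hz0ne : ∀ ζ ∈ D, ζ + z0 ≠ 0 := by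
    intro ζ hζ h
    have := hz0norm ζ hζ
    rw [h, norm_zero] at this
    linarith
  have hSbound : ∀ ζ ∈ D, ‖S ζ‖ ≤ 2 * Scs / a := by
    intro ζ hζ
    calc ‖S ζ‖ ≤ ∑ k ∈ Finset.range N, ‖(c k : ℂ) / (ζ + (γs k : ℂ))‖ :=
          norm_sum_le _ _
    _ ≤ ∑ k ∈ Finset.range N, c k / (a / 2) := by
        apply Finset.sum_le_sum
        intro k hk
        apply norm_div_le_aux _ _ _ (by positivity) (hγnorm ζ hζ k)
        rw [Complex.norm_real]
        exact le_of_eq (abs_of_pos (hc k (Finset.mem_range.mp hk)))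
    _ = 2 * Scs / a := by rw [← Finset.sum_div, hScdef]; field_simp
  have hSdiff : ∀ x ∈ D, ∀ y ∈ D, ‖S x - S y‖ ≤ 4 * Scs / (a * a) * ‖x - y‖ := by
    intro x hx y hy
    have hsum : S x - S y = ∑ k ∈ Finset.range N,
        ((c k : ℂ) * (y - x) / ((x + (γs k : ℂ)) * (y + (γs k : ℂ)))) := by
      rw [hSdef]
      simp only
      rw [← Finset.sum_sub_distrib]
      apply Finset.sum_congr rfl
      intro k _
      field_simp [hγne x hx k, hγne y hy k]
      ring
    rw [hsum]
    calc ‖∑ k ∈ Finset.range N, ((c k : ℂ) * (y - x) / ((x + (γs k : ℂ)) * (y + (γs k : ℂ))))‖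
        ≤ ∑ k ∈ Finset.range N, ‖(c k : ℂ) * (y - x) / ((x + (γs k : ℂ)) * (y + (γs k : ℂ)))‖ :=
          norm_sum_le _ _
    _ ≤ ∑ k ∈ Finset.range N, c k * ‖x - y‖ / (a / 2 * (a / 2)) := by
        apply Finset.sum_le_sum
        intro k hk
        apply norm_div_le_aux _ _ _ (by positivity) ?_
        · rw [norm_mul, Complex.norm_real, Real.norm_eq_abs, abs_of_pos (hc k (Finset.mem_range.mp hk)),
            ← norm_neg (y - x), neg_sub]
        · rw [norm_mul]
          exact mul_le_mul (hγnorm x hx k) (hγnorm y hy k) (by positivity)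
            (le_trans (by positivity) (hγnorm x hx k))
    _ = 4 * Scs / (a * a) * ‖x - y‖ := by
        rw [← Finset.sum_div, ← Finset.sum_mul, hScdef]
        field_simp
        ring
  -- T maps D to D
  have hTD : ∀ ζ ∈ D, T ζ ∈ D := by
    intro ζ hζ
    rw [hDdef, Metric.mem_closedBall, dist_eq_norm]
    have h1 : T ζ - z0 = (R : ℂ) * S ζ / (ζ + z0) := by rw [hTdef]; ring
    rw [h1]
    calc ‖(R : ℂ) * S ζ / (ζ + z0)‖ ≤ R * (2 * Scs / a) / a := by
          apply norm_div_le_aux _ _ _ ha0 (hz0norm ζ hζ)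
          rw [norm_mul, Complex.norm_real, Real.norm_eq_abs, abs_of_pos hR0]
          exact mul_le_mul_of_nonneg_left (hSbound ζ hζ) hR0.le
    _ = r := by rw [hrdef]; field_simp
  -- contraction estimate
  have hTlip : ∀ x ∈ D, ∀ y ∈ D, ‖T x - T y‖ ≤ (1 / 2) * ‖x - y‖ := by
    intro x hx y hy
    have hx0 := hz0ne x hx
    have hy0 := hz0ne y hy
    have hdecomp : T x - T y = (R : ℂ) * (S x - S y) / (x + z0)
        + (R : ℂ) * S y * (y - x) / ((x + z0) * (y + z0)) := by
      rw [hTdef]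
      field_simp
      ring
    have hA : ‖(R : ℂ) * (S x - S y) / (x + z0)‖ ≤ 4 * Scs / (a * a) * ‖x - y‖ := by
      have h1 : ‖(R : ℂ) * (S x - S y) / (x + z0)‖
          ≤ a * (4 * Scs / (a * a) * ‖x - y‖) / a := by
        apply norm_div_le_aux _ _ _ ha0 (hz0norm x hx)
        rw [norm_mul, Complex.norm_real, Real.norm_eq_abs, abs_of_pos hR0]
        exact mul_le_mul hRa (hSdiff x hx y hy) (norm_nonneg _) ha0.le
      calc ‖(R : ℂ) * (S x - S y) / (x + z0)‖ ≤ a * (4 * Scs / (a * a) * ‖x - y‖) / a := h1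
      _ = 4 * Scs / (a * a) * ‖x - y‖ := by field_simp
    have hB : ‖(R : ℂ) * S y * (y - x) / ((x + z0) * (y + z0))‖
        ≤ 2 * Scs / (a * a) * ‖x - y‖ := by
      have h1 : ‖(R : ℂ) * S y * (y - x)‖ ≤ a * (2 * Scs / a) * ‖x - y‖ := by
        rw [norm_mul, norm_mul, Complex.norm_real, Real.norm_eq_abs, abs_of_pos hR0,
          ← norm_neg (y - x), neg_sub]
        exact mul_le_mul (mul_le_mul hRa (hSbound y hy) (norm_nonneg _) ha0.le)
          le_rfl (norm_nonneg _) (by positivity)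
      have h2 : a * a ≤ ‖(x + z0) * (y + z0)‖ := by
        rw [norm_mul]
        exact mul_le_mul (hz0norm x hx) (hz0norm y hy) ha0.le
          (le_trans ha0.le (hz0norm x hx))
      calc ‖(R : ℂ) * S y * (y - x) / ((x + z0) * (y + z0))‖
          ≤ (a * (2 * Scs / a) * ‖x - y‖) / (a * a) := norm_div_le_aux _ _ h1 (by positivity) h2
      _ = 2 * Scs / (a * a) * ‖x - y‖ := by field_simp; try ring
    calc ‖T x - T y‖ ≤ ‖(R : ℂ) * (S x - S y) / (x + z0)‖
          + ‖(R : ℂ) * S y * (y - x) / ((x + z0) * (y + z0))‖ := by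
          rw [hdecomp]; exact norm_add_le _ _
    _ ≤ 4 * Scs / (a * a) * ‖x - y‖ + 2 * Scs / (a * a) * ‖x - y‖ := add_le_add hA hB
    _ = 6 * Scs / (a * a) * ‖x - y‖ := by ring
    _ ≤ (1 / 2) * ‖x - y‖ := by
        apply mul_le_mul_of_nonneg_right _ (norm_nonneg _)
        rw [div_le_iff₀ (by positivity)]
        nlinarith
  -- Banach fixed point on the closed ball
  haveI : CompleteSpace D := (Metric.isClosed_closedBall (x := z0) (ε := r)).completeSpace_coe
  haveI : Nonempty D := ⟨⟨z0, Metric.mem_closedBall_self hr0.le⟩⟩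
  set f : D → D := fun z => ⟨T z, hTD z z.2⟩ with hfdef
  have hcontr : ContractingWith (1 / 2 : NNReal) f := by
    constructor
    · rw [← NNReal.coe_lt_coe]; push_cast; norm_num
    · apply LipschitzWith.of_dist_le_mul
      intro x y
      simp only [Subtype.dist_eq, dist_eq_norm]
      have h := hTlip x x.2 y y.2
      have hco : ((1 / 2 : NNReal) : ℝ) = 1 / 2 := by push_cast; norm_num
      rw [hco]
      simpa using h
  set μD : D := hcontr.fixedPoint f with hμDdef
  have hfixD : f μD = μD := hcontr.fixedPoint_isFixedPt
  set μ : ℂ := (μD : ℂ) with hμdef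
  have hμD : μ ∈ D := μD.2
  have hfix : T μ = μ := congrArg Subtype.val hfixD
  have hμz0ne : μ + z0 ≠ 0 := hz0ne μ hμD
  -- μ is a zero of ℓ a
  have hkey : (R : ℂ) * S μ = (μ - z0) * (μ + z0) := by
    have h2 : (R : ℂ) * S μ / (μ + z0) = μ - z0 := by
      rw [eq_sub_iff_add_eq, add_comm]
      exact hfix
    rw [← h2, div_mul_cancel₀ _ hμz0ne]
  have hμzero : ℓ a μ = 0 := by
    rw [hℓ]
    have : ((a ^ (2 * ξ) : ℝ) : ℂ) * ∑ k ∈ Finset.range N, (c k : ℂ) / (μ + (γs k : ℂ))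
        = (R : ℂ) * S μ := by rw [hRdef, hSdef]
    rw [this, hkey, hz0def]
    have : (Complex.I * (a : ℂ)) * (Complex.I * (a : ℂ)) = -(a : ℂ) ^ 2 := by
      rw [show Complex.I * (a : ℂ) * (Complex.I * (a : ℂ)) = Complex.I ^ 2 * (a : ℂ) ^ 2 by ring,
        Complex.I_sq]
      ring
    ring_nf
    rw [show Complex.I ^ 2 = -1 from Complex.I_sq]
    ring
  -- bounds
  have hμdist : ‖μ - z0‖ ≤ r := hmemD μ hμD
  have hμim : a / 2 ≤ μ.im := hIm μ hμD
  have hre : |μ.re| ≤ r := by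
    have h1 : (μ - z0).re = μ.re := by simp [hz0re]
    calc |μ.re| = |(μ - z0).re| := by rw [h1]
    _ ≤ ‖μ - z0‖ := by exact Complex.abs_re_le_norm _
    _ ≤ r := hμdist
  have him : |μ.im - a| ≤ r := by
    have h1 : (μ - z0).im = μ.im - a := by simp [hz0im]
    calc |μ.im - a| = |(μ - z0).im| := by rw [h1]
    _ ≤ ‖μ - z0‖ := by exact Complex.abs_im_le_norm _
    _ ≤ r := hμdist
  have hrX : r = 2 * Scs * a ^ (-(2 * (1 - ξ))) := by rw [hX, hrdef]; ring
  refine ⟨μ, hμzero, by linarith, ?_, ?_, ?_⟩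
  · have hq : 0 < 1 / 2 * a ^ (-(2 * (1 - ξ))) * Scs :=
      mul_pos (mul_pos one_half_pos hXpos) hScpos
    calc |μ.re + 1 / 2 * a ^ (-(2 * (1 - ξ))) * Scs|
        ≤ |μ.re| + |1 / 2 * a ^ (-(2 * (1 - ξ))) * Scs| := abs_add_le _ _
    _ = |μ.re| + 1 / 2 * a ^ (-(2 * (1 - ξ))) * Scs := by rw [abs_of_pos hq]
    _ ≤ r + 1 / 2 * a ^ (-(2 * (1 - ξ))) * Scs := by linarith
    _ ≤ 3 * Scs * a ^ (-(2 * (1 - ξ))) := by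
        rw [hrX]; nlinarith [hXpos, hScpos]
  · calc |μ.im - a| ≤ r := him
    _ = 2 * Scs * a ^ (-(2 * (1 - ξ))) := hrX
    _ ≤ 3 * Scs * a ^ (-(1 - 2 * ξ)) := by
        have h2 := Real.rpow_pos_of_pos ha0 (-(1 - 2*ξ))
        nlinarith [hXY, hXpos, hScpos, h2]
  · have hconj : ℓ a ((starRingEnd ℂ) μ) = (starRingEnd ℂ) (ℓ a μ) := by
      rw [hℓ, hℓ]
      simp [map_sum, map_div₀, Complex.conj_ofReal]
    rw [hconj, hμzero, map_zero]
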